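/- Weighted sparsity recovery of a parallel-image source: let K : M(Ω) → L²(E) be bounded linear with kernel representation Kμ = ∫_Ω k(x,·) dμ(x), define the weight w̃(x) = ‖Kδ_x‖_{L²(E)}, and let μ* = μ_R be the (positive) measure with density χ_R. Assume there exist a continuous τ > 0 on R and a point x̄ ∈ R with Kδ_z = τ(z) Kδ_{x̄} for all z ∈ R. Then μ* minimizes ‖μ‖_{M_w̃(Ω)} = ∫_Ω w̃ d|μ| subject to Kμ = Kμ*. -/

import Mathlib

open MeasureTheory

/-- Weighted sparsity recovery of a parallel-image source. `κ x = K δ_x ∈ L²(E)` (modeled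
as a Hilbert space `H`) is the kernel of `K : M(Ω) → L²(E)`, so that
`Kμ = ∫ κ dμ` (via the Jordan decomposition for a signed measure `μ`), and the weight is
`w̃(x) = ‖K δ_x‖ = ‖κ x‖`, bounded between positive constants. The true source is
`μ* = μ_R`, the measure with density `χ_R`, so `Kμ* = ∫_R κ` and
`‖μ*‖_{M_w̃} = ∫_R w̃`. If `Kδ_z = τ(z) Kδ_{x̄}` with `τ(z) > 0` on `R` for some
`x̄ ∈ R`, then `μ*` minimizes `‖μ‖_{M_w̃} = ∫ w̃ d|μ|` subject to `Kμ = Kμ*`. -/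
theorem stmt17 {α H : Type*} [MeasureSpace α]
    [NormedAddCommGroup H] [InnerProductSpace ℝ H] [CompleteSpace H]
    (κ : α → H)
    (R : Set α) (hRmeas : MeasurableSet R) (hRfin : volume R ≠ ⊤)
    (hκR : Integrable κ (volume.restrict R))
    (wmin wmax : ℝ) (hwmin : 0 < wmin)
    (hw : ∀ x : α, wmin ≤ ‖κ x‖ ∧ ‖κ x‖ ≤ wmax)
    (xbar : α) (hxbar : xbar ∈ R)
    (τ : α → ℝ) (hτ : ∀ z ∈ R, 0 < τ z ∧ κ z = τ z • κ xbar) :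
    ∀ μ : SignedMeasure α,
      Integrable κ μ.totalVariation →
      ((∫ x, κ x ∂μ.toJordanDecomposition.posPart) -
          ∫ x, κ x ∂μ.toJordanDecomposition.negPart) = ∫ x in R, κ x →
      (∫ x in R, ‖κ x‖) ≤ ∫ x, ‖κ x‖ ∂μ.totalVariation := by
  intro μ hint hK
  have hκb : 0 < ‖κ xbar‖ := lt_of_lt_of_le hwmin (hw xbar).1
  -- left side equals ‖∫_R κ‖
  have hτint : IntegrableOn τ R := by
    have : IntegrableOn (fun x => ‖κ x‖ / ‖κ xbar‖) R := (hκR.norm.div_const _)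
    refine this.congr_fun (fun x hx => ?_) hRmeas
    beta_reduce
    rw [(hτ x hx).2, norm_smul, Real.norm_eq_abs, abs_of_pos (hτ x hx).1,
      mul_div_assoc, div_self hκb.ne', mul_one]
  have hτnn : 0 ≤ ∫ x in R, τ x :=
    setIntegral_nonneg hRmeas (fun x hx => (hτ x hx).1.le)
  have hL : (∫ x in R, ‖κ x‖) = ‖∫ x in R, κ x‖ := by
    have h1 : (∫ x in R, ‖κ x‖) = (∫ x in R, τ x) * ‖κ xbar‖ := by
      rw [← integral_mul_const]
      refine setIntegral_congr_fun hRmeas (fun x hx => ?_)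
      rw [(hτ x hx).2, norm_smul, Real.norm_eq_abs, abs_of_pos (hτ x hx).1]
    have h2 : (∫ x in R, κ x) = (∫ x in R, τ x) • κ xbar := by
      rw [← integral_smul_const]
      exact setIntegral_congr_fun hRmeas (fun x hx => (hτ x hx).2)
    rw [h1, h2, norm_smul, Real.norm_eq_abs, abs_of_nonneg hτnn]
  -- total variation splits
  have htv : μ.totalVariation =
      μ.toJordanDecomposition.posPart + μ.toJordanDecomposition.negPart := rfl
  have hintp : Integrable κ μ.toJordanDecomposition.posPart :=
    ((integrable_add_measure).mp (htv ▸ hint)).1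
  have hintn : Integrable κ μ.toJordanDecomposition.negPart :=
    ((integrable_add_measure).mp (htv ▸ hint)).2
  calc (∫ x in R, ‖κ x‖) = ‖∫ x in R, κ x‖ := hL
    _ = ‖(∫ x, κ x ∂μ.toJordanDecomposition.posPart) -
          ∫ x, κ x ∂μ.toJordanDecomposition.negPart‖ := by rw [hK]
    _ ≤ ‖∫ x, κ x ∂μ.toJordanDecomposition.posPart‖ +
          ‖∫ x, κ x ∂μ.toJordanDecomposition.negPart‖ := norm_sub_le _ _
    _ ≤ (∫ x, ‖κ x‖ ∂μ.toJordanDecomposition.posPart) +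
          ∫ x, ‖κ x‖ ∂μ.toJordanDecomposition.negPart :=
        add_le_add (norm_integral_le_integral_norm _) (norm_integral_le_integral_norm _)
    _ = ∫ x, ‖κ x‖ ∂μ.totalVariation := by
        rw [htv, integral_add_measure hintp.norm hintn.norm]
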